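/- arXiv:0908.1967 — 2 statements merged into one kernel-verified Lean document; each statement's English description precedes it below -/
import Mathlib

section
/- A word z in nonnegative integers is the cocharge labeling of some standard word if and only if there exists l ≥ 0 such that: the number c_i of occurrences of i in z is positive for all i in [0,l], c_i = 0 for all i > l, and for every i in [1,l] some occurrence of i appears strictly to the left of some occurrence of i-1 in z. -/
/-- `w` is a standard word of length `n`: a permutation of `1, …, n`. -/
def IsStandardWord (n : ℕ) (w : List ℕ) : Prop :=
  w.Perm ((List.range n).map (· + 1))

/-- The cocharge label of the entry `i` of the standard word `w`:
the entry `1` is labeled `0`, and the entry `i+1` gets the label of `i`,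
incremented by `1` exactly when `i+1` appears to the left of `i` in `w`. -/
def entryLabel (w : List ℕ) : ℕ → ℕ
  | 0 => 0
  | 1 => 0
  | i + 2 => entryLabel w (i + 1) + (if w.idxOf (i + 2) < w.idxOf (i + 1) then 1 else 0)

/-- The cocharge labeling of `w`: each letter of `w` is replaced by its label. -/
def cochargeLabeling (w : List ℕ) : List ℕ := w.map (entryLabel w)

/-- The cocharge of `w`: the sum of the entries of its cocharge labeling. -/
def cocharge (w : List ℕ) : ℕ := (cochargeLabeling w).sum

/-- Swap the entries of `w` in (0-indexed) positions `j` and `j+1`. -/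
def swapAdj (w : List ℕ) (j : ℕ) : List ℕ :=
  (w.set j (w.getD (j + 1) 0)).set (j + 1) (w.getD j 0)


lemma entryLabel_succ (w : List ℕ) (i : ℕ) (hi : 1 ≤ i) :
    entryLabel w (i + 1) =
      entryLabel w i + (if w.idxOf (i + 1) < w.idxOf i then 1 else 0) := by
  obtain ⟨j, rfl⟩ := Nat.exists_eq_add_of_le hi
  rw [Nat.add_comm 1 j]
  rfl

lemma entryLabel_step (w : List ℕ) (i : ℕ) : entryLabel w (i + 1) ≤ entryLabel w i + 1 := by
  match i with
  | 0 => simp [entryLabel]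
  | j + 1 =>
    rw [entryLabel_succ w (j+1) (by omega)]
    split <;> omega

lemma entryLabel_le (w : List ℕ) {i j : ℕ} (h : i ≤ j) : entryLabel w i ≤ entryLabel w j := by
  induction j with
  | zero =>
    have : i = 0 := by omega
    subst this; exact le_rfl
  | succ k ih =>
    rcases Nat.lt_or_ge i (k+1) with h' | h'
    · refine le_trans (ih (by omega)) ?_
      match k with
      | 0 => simp [entryLabel]
      | m + 1 => rw [entryLabel_succ w (m+1) (by omega)]; omega
    · have : i = k + 1 := by omega
      subst this; rfl

/-- crossing lemma -/
lemma cross_lemma (f : ℕ → ℕ) {a b k : ℕ} (ha : f a < k) (hb : k ≤ f b) (hab : a ≤ b) :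
    ∃ i, a ≤ i ∧ i < b ∧ f i < k ∧ k ≤ f (i + 1) := by
  induction b with
  | zero =>
    have : a = 0 := by omega
    subst this; omega
  | succ c ih =>
    rcases eq_or_ne a (c + 1) with rfl | hne
    · omega
    · have hac : a ≤ c := by omega
      rcases Nat.lt_or_ge (f c) k with h' | h'
      · exact ⟨c, hac, by omega, h', hb⟩
      · obtain ⟨i, h1, h2, h3, h4⟩ := ih h' hac
        exact ⟨i, h1, by omega, h3, h4⟩

lemma mem_std {n : ℕ} {w : List ℕ} (hw : IsStandardWord n w) {x : ℕ} :
    x ∈ w ↔ 1 ≤ x ∧ x ≤ n := by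
  rw [hw.mem_iff, List.mem_map]
  constructor
  · rintro ⟨r, hr, rfl⟩
    rw [List.mem_range] at hr
    omega
  · rintro ⟨h1, h2⟩
    exact ⟨x - 1, List.mem_range.2 (by omega), by omega⟩

lemma forward_dir (z : List ℕ) (hz : z ≠ []) (n : ℕ) (w : List ℕ)
    (hw : IsStandardWord n w) (hzw : cochargeLabeling w = z) :
    ∃ l : ℕ,
        (∀ i ≤ l, 0 < z.count i) ∧
        (∀ i, l < i → z.count i = 0) ∧
        (∀ i, 1 ≤ i → i ≤ l →
          ∃ p q, p < q ∧ q < z.length ∧ z.getD p 0 = i ∧ z.getD q 0 = i - 1) := by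
  subst hzw
  set f := entryLabel w with hf
  have hwlen : w.length = n := by
    rw [hw.length_eq, List.length_map, List.length_range]
  have hn : 1 ≤ n := by
    rcases Nat.eq_zero_or_pos n with rfl | h
    · exfalso; apply hz
      simpa [cochargeLabeling, List.map_eq_nil_iff] using List.length_eq_zero_iff.1 hwlen
    · exact h
  have hmemz : ∀ k, k ∈ cochargeLabeling w ↔ ∃ x, (1 ≤ x ∧ x ≤ n) ∧ f x = k := by
    intro k
    rw [cochargeLabeling, List.mem_map]
    constructor
    · rintro ⟨x, hx, rfl⟩; exact ⟨x, (mem_std hw).1 hx, rfl⟩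
    · rintro ⟨x, hx, rfl⟩; exact ⟨x, (mem_std hw).2 hx, rfl⟩
  refine ⟨f n, ?_, ?_, ?_⟩
  · intro k hk
    rw [List.count_pos_iff, hmemz]
    have h1 : f 1 = 0 := rfl
    -- find i in [1,n] with f i = k : use cross lemma on k+... use cases
    rcases Nat.eq_zero_or_pos k with rfl | hkpos
    · exact ⟨1, ⟨le_rfl, hn⟩, h1⟩
    · obtain ⟨i, hi1, hin, hlt, hge⟩ := cross_lemma f (h1 ▸ hkpos) hk hn
      refine ⟨i + 1, ⟨by omega, by omega⟩, ?_⟩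
      have hst : f (i + 1) ≤ f i + 1 := entryLabel_step w i
      omega
  · intro k hk
    rw [List.count_eq_zero]
    rw [hmemz]
    rintro ⟨x, ⟨hx1, hx2⟩, rfl⟩
    have hle : f x ≤ f n := entryLabel_le w hx2
    omega
  · intro k hk1 hk2
    have h1 : f 1 = 0 := rfl
    obtain ⟨i, hi1, hin, hlt, hge⟩ := cross_lemma f (h1 ▸ (by omega : 0 < k)) hk2 hn
    have hstep : f (i + 1) ≤ f i + 1 := entryLabel_step w i
    have hfi : f i = k - 1 := by omega
    have hfi1 : f (i + 1) = k := by omega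
    have hsucc : f (i + 1) = f i + (if w.idxOf (i + 1) < w.idxOf i then 1 else 0) := entryLabel_succ w i hi1
    have hite : w.idxOf (i + 1) < w.idxOf i := by
      by_contra hcon
      rw [if_neg hcon] at hsucc
      omega
    have hmi : i ∈ w := (mem_std hw).2 ⟨hi1, by omega⟩
    have hmi1 : i + 1 ∈ w := (mem_std hw).2 ⟨by omega, by omega⟩
    have hq : w.idxOf i < w.length := List.idxOf_lt_length_iff.2 hmi
    have hp : w.idxOf (i + 1) < w.length := List.idxOf_lt_length_iff.2 hmi1
    have hzl : (cochargeLabeling w).length = w.length := List.length_map _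
    refine ⟨w.idxOf (i + 1), w.idxOf i, hite, by omega, ?_, ?_⟩
    · rw [List.getD_eq_getElem _ _ (by omega)]
      simp only [cochargeLabeling, List.getElem_map, List.getElem_idxOf hp]
      exact hfi1
    · rw [List.getD_eq_getElem _ _ (by omega)]
      simp only [cochargeLabeling, List.getElem_map, List.getElem_idxOf hq]
      exact hfi

lemma lex_helper (n a b p : ℕ) (hp : p < n) (hab : a < b) (q : ℕ) : a * n + p < b * n + q := by
  have h2 : (a + 1) * n ≤ b * n := Nat.mul_le_mul_right n (by omega)
  rw [add_mul, one_mul] at h2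
  omega

lemma key_div (n a p : ℕ) (hn : 0 < n) (hp : p < n) : (a * n + p) / n = a := by
  rw [mul_comm, Nat.mul_add_div hn, Nat.div_eq_of_lt hp]
  omega

lemma key_mod (n a p : ℕ) (hp : p < n) : (a * n + p) % n = p := by
  rw [mul_comm, Nat.mul_add_mod, Nat.mod_eq_of_lt hp]

lemma backward_dir (z : List ℕ) (hz : z ≠ []) (l : ℕ)
    (h0 : ∀ i ≤ l, 0 < z.count i)
    (h1 : ∀ i, l < i → z.count i = 0)
    (h2 : ∀ i, 1 ≤ i → i ≤ l →
      ∃ p q, p < q ∧ q < z.length ∧ z.getD p 0 = i ∧ z.getD q 0 = i - 1) :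
    ∃ n w, IsStandardWord n w ∧ cochargeLabeling w = z := by
  set n := z.length with hnz
  have hn : 0 < n := List.length_pos_iff.2 hz
  set key : ℕ → ℕ := fun p => z.getD p 0 * n + p with hkeydef
  set keys : List ℕ := (List.range n).map key with hkeysdef
  set ks : List ℕ := keys.mergeSort with hksdef
  have hksp : ks.Perm keys := List.mergeSort_perm keys _
  have hsort : ks.Pairwise (· ≤ ·) := List.pairwise_mergeSort' (· ≤ ·) keys
  have hkeyinj : ∀ p < n, ∀ q < n, key p = key q → p = q := by
    intro p hp q hq h
    have h1 : key p % n = p := key_mod n _ p hp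
    have h2 : key q % n = q := key_mod n _ q hq
    rw [h] at h1; omega
  have hkeysnodup : keys.Nodup := by
    refine List.Nodup.map_on ?_ List.nodup_range
    intro p hp q hq
    exact hkeyinj p (List.mem_range.1 hp) q (List.mem_range.1 hq)
  have hksnodup : ks.Nodup := hksp.nodup_iff.2 hkeysnodup
  have hkslen : ks.length = n := by rw [hksp.length_eq, hkeysdef]; simp
  have hstrict : ∀ i j (hi : i < ks.length) (hj : j < ks.length), i < j → ks[i] < ks[j] := by
    have hle := List.pairwise_iff_getElem.1 hsort
    have hne := List.pairwise_iff_getElem.1 hksnodup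
    intro i j hi hj hij
    exact lt_of_le_of_ne (hle i j hi hj hij) (hne i j hi hj hij)
  have hmono : ∀ i j (hi : i < ks.length) (hj : j < ks.length), i ≤ j → ks[i] ≤ ks[j] := by
    intro i j hi hj hij
    rcases eq_or_lt_of_le hij with rfl | h
    · exact le_rfl
    · exact le_of_lt (hstrict i j hi hj h)
  have hdec : ∀ j (hj : j < ks.length), ∃ p, p < n ∧ ks[j] = key p := by
    intro j hj
    have : ks[j] ∈ keys := hksp.subset (ks.getElem_mem hj)
    rw [hkeysdef, List.mem_map] at this
    obtain ⟨p, hp, hpe⟩ := this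
    exact ⟨p, List.mem_range.1 hp, hpe.symm⟩
  have hkey_mem : ∀ p, p < n → key p ∈ ks := by
    intro p hp
    rw [hksp.mem_iff, hkeysdef, List.mem_map]
    exact ⟨p, List.mem_range.2 hp, rfl⟩
  -- the word
  set g : ℕ → ℕ := fun p => ks.idxOf (key p) with hgdef
  set w : List ℕ := (List.range n).map (fun p => g p + 1) with hwdef
  have hg_lt : ∀ p, p < n → g p < n := by
    intro p hp
    rw [← hkslen]
    exact List.idxOf_lt_length_iff.2 (hkey_mem p hp)
  have hks_g : ∀ p (hp : p < n), ks[g p]'(by rw [hkslen]; exact hg_lt p hp) = key p := by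
    intro p hp
    exact List.getElem_idxOf (List.idxOf_lt_length_iff.2 (hkey_mem p hp))
  have hwlen : w.length = n := by rw [hwdef]; simp
  have hw_get : ∀ p (hp : p < n), w[p]'(by omega) = g p + 1 := by
    intro p hp
    show (List.map (fun p => g p + 1) (List.range n))[p]'(by simpa using hp) = g p + 1
    simp
  have hginj : ∀ p < n, ∀ q < n, g p = g q → p = q := by
    intro p hp q hq h
    apply hkeyinj p hp q hq
    rw [← hks_g p hp, ← hks_g q hq]
    congr 1
  have hwnodup : w.Nodup := by
    rw [hwdef]
    refine List.Nodup.map_on ?_ List.nodup_range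
    intro p hp q hq h
    exact hginj p (List.mem_range.1 hp) q (List.mem_range.1 hq) (by omega)
  -- index data for each rank j
  have hPQ : ∀ j (hj : j < n), ∃ p, p < n ∧ ks[j]'(by omega) = key p ∧
      w.idxOf (j + 1) = p ∧ z.getD p 0 = ks[j]'(by omega) / n := by
    intro j hj
    obtain ⟨p, hp, hkp⟩ := hdec j (by omega)
    have hgp : g p = j := by
      rw [hgdef]
      simp only
      rw [← hkp]
      exact List.Nodup.idxOf_getElem hksnodup j (by omega)
    have hwp : w[p]'(by omega) = j + 1 := by rw [hw_get p hp, hgp]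
    refine ⟨p, hp, hkp, ?_, ?_⟩
    · conv_lhs => rw [← hwp]
      exact List.Nodup.idxOf_getElem hwnodup p (by omega)
    · rw [hkp, hkeydef]
      simp only
      rw [key_div n _ p hn hp]
  -- membership of values in z
  have hzval : ∀ r, r < n → 0 < z.count (z.getD r 0) := by
    intro r hr
    rw [List.count_pos_iff]
    rw [List.getD_eq_getElem z 0 (by omega)]
    exact z.getElem_mem (by omega)
  have hvalmem : ∀ v, 0 < z.count v → ∃ r, r < n ∧ z.getD r 0 = v := by
    intro v hv
    rw [List.count_pos_iff, List.mem_iff_getElem] at hv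
    obtain ⟨r, hr, hre⟩ := hv
    exact ⟨r, by omega, by rw [List.getD_eq_getElem z 0 (by omega)]; exact hre⟩
  -- the main label computation
  have hlabel : ∀ j (hj : j < n), entryLabel w (j + 1) = ks[j]'(by omega) / n := by
    intro j
    induction j with
    | zero =>
      intro hj
      obtain ⟨r, hr, hre⟩ := hvalmem 0 (h0 0 (Nat.zero_le l))
      have hkr : key r = r := by
        show z.getD r 0 * n + r = r
        rw [hre]; simp
      obtain ⟨m, hm, hme⟩ := List.mem_iff_getElem.1 (hkey_mem r hr)
      have : ks[0]'(by omega) ≤ key r := by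
        rw [← hme]; exact hmono 0 m (by omega) hm (Nat.zero_le m)
      have hlt : ks[0]'(by omega) < n := by omega
      show entryLabel w 1 = _
      rw [Nat.div_eq_of_lt hlt]
      rfl
    | succ j ih =>
      intro hj
      have hj' : j < n := by omega
      obtain ⟨p, hp, hkp, hwip, hzp⟩ := hPQ j hj'
      obtain ⟨q, hq, hkq, hwiq, hzq⟩ := hPQ (j + 1) hj
      set a := z.getD p 0 with ha
      set b := z.getD q 0 with hb
      have hkja : ks[j]'(by omega) = a * n + p := by rw [hkp, hkeydef]
      have hkjb : ks[j + 1]'(by omega) = b * n + q := by rw [hkq, hkeydef]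
      have hlt : ks[j]'(by omega) < ks[j + 1]'(by omega) :=
        hstrict j (j + 1) (by omega) (by omega) (by omega)
      have hab : a ≤ b := by
        by_contra hcon
        have := lex_helper n b a q hq (by omega) p
        omega
      have hgoal : entryLabel w (j + 1 + 1) =
          entryLabel w (j + 1) + (if w.idxOf (j + 2) < w.idxOf (j + 1) then 1 else 0) :=
        entryLabel_succ w (j + 1) (by omega)
      have hdiva : ks[j]'(by omega) / n = a := by rw [hkja]; exact key_div n a p hn hp
      have hdivb : ks[j + 1]'(by omega) / n = b := by rw [hkjb]; exact key_div n b q hn hq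
      rcases eq_or_lt_of_le hab with heq | hablt
      · -- same value: p < q, no increment
        have hpq : p < q := by rw [hkja, hkjb, ← heq] at hlt; omega
        rw [hgoal, ih hj', if_neg (by rw [hwip, hwiq]; omega), hdiva, hdivb, ← heq]
        omega
      · -- a < b
        have hbl : b ≤ l := by
          by_contra hcon
          have hz1 := h1 b (by omega)
          have hz2 := hzval q hq
          rw [← hb] at hz2
          omega
        have hb1 : b = a + 1 := by
          by_contra hcon
          obtain ⟨r, hr, hre⟩ := hvalmem (a + 1) (h0 (a + 1) (by omega))
          have hkr : key r = (a + 1) * n + r := by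
            show z.getD r 0 * n + r = (a + 1) * n + r
            rw [hre]
          obtain ⟨m, hm, hme⟩ := List.mem_iff_getElem.1 (hkey_mem r hr)
          have hlow : ks[j]'(by omega) < key r := by
            rw [hkja, hkr]; exact lex_helper n a (a + 1) p hp (by omega) r
          have hhigh : key r < ks[j + 1]'(by omega) := by
            rw [hkjb, hkr]; exact lex_helper n (a + 1) b r hr (by omega) q
          rcases Nat.lt_or_ge m (j + 1) with hmj | hmj
          · have := hmono m j hm (by omega) (by omega)
            omega
          · have := hmono (j + 1) m (by omega) hm hmj
            omega
        obtain ⟨P, Q, hPQlt, hQn, hPv, hQv⟩ := h2 b (by omega) hbl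
        have hPn : P < n := by omega
        have hQv' : z.getD Q 0 = a := by rw [hQv]; omega
        have hkP : key P = b * n + P := by
          show z.getD P 0 * n + P = b * n + P
          rw [hPv]
        have hkQ : key Q = a * n + Q := by
          show z.getD Q 0 * n + Q = a * n + Q
          rw [hQv']
        -- q ≤ P
        obtain ⟨mP, hmP, hmPe⟩ := List.mem_iff_getElem.1 (hkey_mem P hPn)
        have hqP : q ≤ P := by
          rcases Nat.lt_or_ge mP (j + 1) with hmj | hmj
          · exfalso
            have hmle := hmono mP j hmP (by omega) (by omega)
            have := lex_helper n a b p hp hablt P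
            omega
          · have := hmono (j + 1) mP (by omega) hmP hmj
            omega
        -- Q ≤ p
        obtain ⟨mQ, hmQ, hmQe⟩ := List.mem_iff_getElem.1 (hkey_mem Q (by omega))
        have hQp : Q ≤ p := by
          rcases Nat.lt_or_ge mQ (j + 1) with hmj | hmj
          · have := hmono mQ j hmQ (by omega) (by omega)
            omega
          · exfalso
            have := hmono (j + 1) mQ (by omega) hmQ hmj
            have := lex_helper n a b Q (by omega) hablt q
            omega
        have hqp : q < p := by omega
        rw [hgoal, ih hj', if_pos (by rw [hwip, hwiq]; omega), hdiva, hdivb]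
        omega
  -- conclude
  refine ⟨n, w, ?_, ?_⟩
  · rw [hwdef]
    have : (fun p => g p + 1) = (· + 1) ∘ g := rfl
    rw [this, ← List.map_map]
    apply List.Perm.map
    have hnodup : ((List.range n).map g).Nodup := by
      refine List.Nodup.map_on ?_ List.nodup_range
      intro p hp q hq
      exact hginj p (List.mem_range.1 hp) q (List.mem_range.1 hq)
    have hsub : (List.range n).map g ⊆ List.range n := by
      intro x hx
      rw [List.mem_map] at hx
      obtain ⟨p, hp, rfl⟩ := hx
      exact List.mem_range.2 (hg_lt p (List.mem_range.1 hp))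
    exact (List.subperm_of_subset hnodup hsub).perm_of_length_le (by simp)
  · apply List.ext_getElem
    · simp only [cochargeLabeling, List.length_map]; omega
    · intro r hr1 hr2
      have hrn : r < n := by
        simp only [cochargeLabeling, List.length_map] at hr1; omega
      simp only [cochargeLabeling]
      rw [List.getElem_map]
      rw [hw_get r hrn]
      rw [hlabel (g r) (hg_lt r hrn)]
      rw [hks_g r hrn, hkeydef]
      simp only
      rw [key_div n _ r hn hrn]
      exact List.getD_eq_getElem z 0 hr2

/-- A nonempty word `z` of nonnegative integers is the cocharge labeling of a
standard word if and only if there is an `l ≥ 0` such that every `i ∈ [0, l]`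
occurs in `z`, no `i > l` occurs in `z`, and for every `i ∈ [1, l]` some
occurrence of `i` lies strictly to the left of some occurrence of `i - 1`. -/
theorem cochargeLabeling_characterization (z : List ℕ) (hz : z ≠ []) :
    (∃ n w, IsStandardWord n w ∧ cochargeLabeling w = z) ↔
      ∃ l : ℕ,
        (∀ i ≤ l, 0 < z.count i) ∧
        (∀ i, l < i → z.count i = 0) ∧
        (∀ i, 1 ≤ i → i ≤ l →
          ∃ p q, p < q ∧ q < z.length ∧ z.getD p 0 = i ∧ z.getD q 0 = i - 1) := by
  constructor
  · rintro ⟨n, w, hw, hzw⟩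
    exact forward_dir z hz n w hw hzw
  · rintro ⟨l, h0, h1, h2⟩
    exact backward_dir z hz l h0 h1 h2
end

section
/- If v is a nonzero corotation of u (standard words of length n), then for every k, I_k(ṽ) = I_k(ũ), where I_k denotes the maximum size of a k-bounded chain family of the extended function. -/
/-- The extension `w̃ : ℤ_{≤ n} → ℤ_{≥ 0}` of the cocharge labeling `z` of `w`:
`w̃ i = z_{i + k n} + k` where `k` is the unique integer with `i + k n ∈ [1, n]`
(defined on all of `ℤ`; only values at `i ≤ n` are relevant). -/
def extFn (w : List ℕ) (n : ℕ) (i : ℤ) : ℤ :=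
  ((cochargeLabeling w).getD ((i - 1).emod (n : ℤ)).toNat 0 : ℤ) - (i - 1).fdiv (n : ℤ)

/-- `j` (restricted to indices `0, …, k'`) is a chain of `g` of length `k' + 1`:
`j_{k'} < ⋯ < j_0` are integers `≤ n` with `g (j_i) = i` and pairwise distinct
residues mod `n`. -/
def IsChainOf (g : ℤ → ℤ) (n : ℕ) (k' : ℕ) (j : ℕ → ℤ) : Prop :=
  (∀ i ≤ k', j i ≤ (n : ℤ)) ∧
  (∀ i, i + 1 ≤ k' → j (i + 1) < j i) ∧
  (∀ i ≤ k', g (j i) = (i : ℤ)) ∧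
  (∀ i i', i ≤ k' → i' ≤ k' → i ≠ i' → j i % (n : ℤ) ≠ j i' % (n : ℤ))

/-- A `k`-bounded chain family of `g`: finitely many chains of `g`, each of
length at most `k`, whose residue sets mod `n` are pairwise disjoint. -/
structure BddChainFamily (g : ℤ → ℤ) (n k : ℕ) where
  /-- the number of chains -/
  L : ℕ
  /-- `len t + 1` is the length of the `t`-th chain -/
  len : Fin L → ℕ
  /-- the `t`-th chain -/
  j : Fin L → ℕ → ℤ
  chain : ∀ t, IsChainOf g n (len t) (j t)
  bdd : ∀ t, len t + 1 ≤ k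
  disj : ∀ t t', t ≠ t' → ∀ i i', i ≤ len t → i' ≤ len t' →
    j t i % (n : ℤ) ≠ j t' i' % (n : ℤ)

/-- The size of a chain family: the cardinality of its support, the union of
the underlying sets of its chains. -/
def BddChainFamily.size {g : ℤ → ℤ} {n k : ℕ} (A : BddChainFamily g n k) : ℕ :=
  ((Finset.univ : Finset (Fin A.L)).biUnion
    (fun t => (Finset.range (A.len t + 1)).image (A.j t))).card

/-- `I_k(g)`: the maximum size of a `k`-bounded chain family of `g`. -/
noncomputable def Ik (g : ℤ → ℤ) (n k : ℕ) : ℕ :=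
  sSup {m | ∃ A : BddChainFamily g n k, A.size = m}

/-- The affine simple reflection `s_d` (for `1 ≤ d ≤ n - 1`): it transposes
`d + k n` and `d + 1 + k n` for every integer `k`. -/
def affSwap (n d : ℕ) (m : ℤ) : ℤ :=
  if m % (n : ℤ) = (d : ℤ) % (n : ℤ) then m + 1
  else if m % (n : ℤ) = ((d : ℤ) + 1) % (n : ℤ) then m - 1
  else m

section Aux

lemma chain_head' {k' : ℕ} {j : ℕ → ℤ} (hdec : ∀ i, i + 1 ≤ k' → j (i + 1) < j i) :
    ∀ i ≤ k', j i + i ≤ j 0 := by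
  intro i
  induction i with
  | zero => simp
  | succ m ih =>
    intro h
    have h1 := hdec m h
    have h2 := ih (Nat.le_of_succ_le h)
    push_cast
    push_cast at h2
    omega

lemma emod_ne_shift' {x y c nn : ℤ} (h : x % nn ≠ y % nn) : (x + c) % nn ≠ (y + c) % nn := by
  intro hc
  exact h (by simpa [Int.ModEq] using Int.ModEq.sub_right c hc)

/-- Shift a chain family by `c`. -/
def BddChainFamily.shift {g h : ℤ → ℤ} {n k : ℕ} (A : BddChainFamily g n k) (c : ℤ)
    (hval : ∀ t i, i ≤ A.len t → h (A.j t i + c) = g (A.j t i))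
    (hbd : ∀ t i, i ≤ A.len t → A.j t i + c ≤ (n : ℤ)) :
    BddChainFamily h n k where
  L := A.L
  len := A.len
  j := fun t i => A.j t i + c
  chain := fun t => by
    obtain ⟨h1, h2, h3, h4⟩ := A.chain t
    refine ⟨fun i hi => hbd t i hi,
      fun i hi => by show A.j t (i+1) + c < A.j t i + c; have := h2 i hi; omega,
      fun i hi => by show h (A.j t i + c) = _; rw [hval t i hi]; exact h3 i hi,
      fun i i' hi hi' hne => emod_ne_shift' (h4 i i' hi hi' hne)⟩
  bdd := A.bdd
  disj := fun t t' hne i i' hi hi' => emod_ne_shift' (A.disj t t' hne i i' hi hi')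

lemma BddChainFamily.shift_size {g h : ℤ → ℤ} {n k : ℕ} (A : BddChainFamily g n k) (c : ℤ)
    (hval : ∀ t i, i ≤ A.len t → h (A.j t i + c) = g (A.j t i))
    (hbd : ∀ t i, i ≤ A.len t → A.j t i + c ≤ (n : ℤ)) :
    (A.shift c hval hbd).size = A.size := by
  unfold BddChainFamily.size
  have : (Finset.univ : Finset (Fin (A.shift c hval hbd).L)).biUnion
      (fun t => (Finset.range ((A.shift c hval hbd).len t + 1)).image ((A.shift c hval hbd).j t))
      = Finset.image (fun x => x + c)
        ((Finset.univ : Finset (Fin A.L)).biUnion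
          (fun t => (Finset.range (A.len t + 1)).image (A.j t))) := by
    rw [Finset.biUnion_image]
    congr 1
    funext t
    rw [Finset.image_image]
    rfl
  rw [this, Finset.card_image_of_injective _ (add_left_injective c)]

lemma Ik_shift {g h : ℤ → ℤ} {n : ℕ} (hgh : ∀ i, g i = h (i - 1)) (hh : h (n : ℤ) ≠ 0)
    (k : ℕ) : Ik g n k = Ik h n k := by
  unfold Ik
  congr 1
  ext m
  constructor
  · rintro ⟨A, rfl⟩
    have hval : ∀ t i, i ≤ A.len t → h (A.j t i + (-1)) = g (A.j t i) := by
      intro t i _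
      rw [hgh]; ring_nf
    have hbd : ∀ t i, i ≤ A.len t → A.j t i + (-1) ≤ (n : ℤ) := by
      intro t i hi
      have := (A.chain t).1 i hi; omega
    exact ⟨A.shift (-1) hval hbd, A.shift_size _ _ _⟩
  · rintro ⟨B, rfl⟩
    have hval : ∀ t i, i ≤ B.len t → g (B.j t i + 1) = h (B.j t i) := by
      intro t i _
      rw [hgh]; ring_nf
    have hbd : ∀ t i, i ≤ B.len t → B.j t i + 1 ≤ (n : ℤ) := by
      intro t i hi
      obtain ⟨h1, h2, h3, _⟩ := B.chain t
      rcases Nat.eq_zero_or_pos i with rfl | hpos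
      · have hle := h1 0 (Nat.zero_le _)
        have h0 : h (B.j t 0) = 0 := by simpa using h3 0 (Nat.zero_le _)
        have : B.j t 0 ≠ (n : ℤ) := fun he => hh (he ▸ h0)
        omega
      · have := chain_head' h2 i hi
        have hle := h1 0 (Nat.zero_le _)
        omega
    exact ⟨B.shift 1 hval hbd, B.shift_size _ _ _⟩

variable {n : ℕ} {w : List ℕ} {a : ℕ}

lemma mem_of_std (hu : IsStandardWord n (w ++ [a])) {b : ℕ} :
    b ∈ w ++ [a] ↔ 1 ≤ b ∧ b ≤ n := by
  rw [hu.mem_iff]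
  simp only [List.mem_map, List.mem_range]
  constructor
  · rintro ⟨c, hc, rfl⟩; omega
  · rintro ⟨h1, h2⟩; exact ⟨b - 1, by omega, by omega⟩

lemma not_mem_w (hu : IsStandardWord n (w ++ [a])) : a ∉ w := by
  have hnd : (w ++ [a]).Nodup := by
    rw [hu.nodup_iff]
    exact List.nodup_range.map (fun x y h => by omega)
  intro h
  exact (List.disjoint_of_nodup_append hnd) h (by simp)

lemma mem_w_of (hu : IsStandardWord n (w ++ [a])) {b : ℕ} (h1 : 1 ≤ b) (h2 : b ≤ n)
    (hb : b ≠ a) : b ∈ w := by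
  have := (mem_of_std hu).mpr ⟨h1, h2⟩
  rcases List.mem_append.mp this with h | h
  · exact h
  · simp at h; omega

lemma entryLabel_corot (hu : IsStandardWord n (w ++ [a])) (ha2 : 2 ≤ a) :
    ∀ m, 1 ≤ m → m ≤ n →
      entryLabel (a :: w) m = entryLabel (w ++ [a]) m + (if m = a then 1 else 0) := by
  have haw := not_mem_w hu
  have idxa_v : (a :: w).idxOf a = 0 := List.idxOf_cons_self
  have idxa_u : (w ++ [a]).idxOf a = w.length := by
    rw [List.idxOf_append_of_notMem haw]; simp
  have idx_v : ∀ b, b ≠ a → (a :: w).idxOf b = w.idxOf b + 1 := fun b hb =>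
    List.idxOf_cons_ne w (fun h => hb h.symm)
  have idx_u : ∀ b, b ∈ w → (w ++ [a]).idxOf b = w.idxOf b := fun b hb =>
    List.idxOf_append_of_mem hb
  intro m
  induction m with
  | zero => omega
  | succ m ih =>
    intro _ hmn
    rcases Nat.eq_zero_or_pos m with rfl | hm1
    · have : (1 : ℕ) ≠ a := by omega
      simp [entryLabel, this]
    · have hml : m ≤ n := by omega
      have ihm := ih hm1 hml
      obtain ⟨m', rfl⟩ : ∃ m', m = m' + 1 := ⟨m - 1, by omega⟩
      rw [show m' + 1 + 1 = m' + 2 from rfl, entryLabel, entryLabel, ihm]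
      by_cases hc1 : m' + 2 = a
      · have hma : m' + 1 ≠ a := by omega
        have hmw : m' + 1 ∈ w := mem_w_of hu (by omega) hml hma
        have hv : (a :: w).idxOf (m' + 2) < (a :: w).idxOf (m' + 1) := by
          rw [hc1, idxa_v, idx_v _ hma]; omega
        have hnu : ¬ (w ++ [a]).idxOf (m' + 2) < (w ++ [a]).idxOf (m' + 1) := by
          rw [hc1, idxa_u, idx_u _ hmw]
          have := List.idxOf_lt_length_iff.mpr hmw
          omega
        rw [if_pos hv, if_neg hnu, if_neg hma, if_pos hc1]
      · by_cases hc2 : m' + 1 = a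
        · have hmw : m' + 2 ∈ w := mem_w_of hu (by omega) hmn hc1
          have hnv : ¬ (a :: w).idxOf (m' + 2) < (a :: w).idxOf (m' + 1) := by
            rw [hc2, idxa_v]; omega
          have hy : (w ++ [a]).idxOf (m' + 2) < (w ++ [a]).idxOf (m' + 1) := by
            rw [hc2, idxa_u, idx_u _ hmw]
            exact List.idxOf_lt_length_iff.mpr hmw
          rw [if_neg hnv, if_pos hy, if_pos hc2, if_neg hc1]
        · have h1w : m' + 1 ∈ w := mem_w_of hu (by omega) hml hc2
          have h2w : m' + 2 ∈ w := mem_w_of hu (by omega) hmn hc1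
          rw [idx_v _ hc1, idx_v _ hc2, idx_u _ h2w, idx_u _ h1w,
            if_neg hc1, if_neg hc2]
          by_cases hlt : List.idxOf (m' + 2) w < List.idxOf (m' + 1) w
          · rw [if_pos hlt, if_pos (by omega :
              List.idxOf (m' + 2) w + 1 < List.idxOf (m' + 1) w + 1)]
          · rw [if_neg hlt, if_neg (by omega :
              ¬ List.idxOf (m' + 2) w + 1 < List.idxOf (m' + 1) w + 1)]

lemma cochargeLabeling_corot (hu : IsStandardWord n (w ++ [a])) (ha2 : 2 ≤ a) (han : a ≤ n) :
    cochargeLabeling (a :: w) =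
      (entryLabel (w ++ [a]) a + 1) :: w.map (entryLabel (w ++ [a])) := by
  have hlab := entryLabel_corot hu ha2
  unfold cochargeLabeling
  rw [List.map_cons]
  congr 1
  · rw [hlab a (by omega) han]; simp
  · apply List.map_congr_left
    intro b hb
    have hba : b ≠ a := fun h => not_mem_w hu (h ▸ hb)
    have hb1 := (mem_of_std hu).mp (List.mem_append.mpr (Or.inl hb))
    rw [hlab b hb1.1 hb1.2]
    simp [hba]

lemma extFn_corot (hu : IsStandardWord n (w ++ [a])) (ha2 : 2 ≤ a) (han : a ≤ n) :
    ∀ i : ℤ, extFn (a :: w) n i = extFn (w ++ [a]) n (i - 1) := by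
  have hlen : w.length + 1 = n := by
    have := hu.length_eq
    simpa using this
  set c := entryLabel (w ++ [a]) a with hc
  set zw := w.map (entryLabel (w ++ [a])) with hzw
  have hzwl : zw.length = w.length := List.length_map _
  have hzu : cochargeLabeling (w ++ [a]) = zw ++ [c] := by
    unfold cochargeLabeling; rw [List.map_append]; rfl
  have hzv : cochargeLabeling (a :: w) = (c + 1) :: zw :=
    cochargeLabeling_corot hu ha2 han
  intro i
  have hN : (0 : ℤ) < (n : ℤ) := by exact_mod_cast (by omega : 0 < n)
  unfold extFn
  rw [hzv, hzu]
  have hem : ∀ x y : ℤ, x.emod y = x % y := fun _ _ => rfl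
  rw [hem, hem]
  set N : ℤ := (n : ℤ) with hNdef
  set r := (i - 1) % N with hrdef
  set q := (i - 1) / N with hqdef
  have hr0 : 0 ≤ r := Int.emod_nonneg _ (by omega)
  have hrN : r < N := Int.emod_lt_of_pos _ hN
  have hqr : N * q + r = i - 1 := Int.mul_ediv_add_emod _ _
  have hfd1 : (i - 1).fdiv N = q := Int.fdiv_eq_ediv_of_nonneg _ (le_of_lt hN)
  have hfd2 : (i - 2).fdiv N = (i - 2) / N := Int.fdiv_eq_ediv_of_nonneg _ (le_of_lt hN)
  rw [show i - 1 - 1 = i - 2 by ring, hfd2, hfd1]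
  by_cases hr : r = 0
  · have heq : i - 2 = (N - 1) + (q - 1) * N := by
      rw [hr] at hqr; linear_combination -hqr
    rw [heq, Int.add_mul_emod_self_right, Int.add_mul_ediv_right _ _ (by omega : N ≠ 0),
      Int.emod_eq_of_lt (by omega) (by omega), Int.ediv_eq_zero_of_lt (by omega) (by omega)]
    have hNt : (N - 1).toNat = zw.length := by
      rw [hzwl]; omega
    rw [hr, hNt]
    simp only [Int.toNat_zero, List.getD_cons_zero]
    rw [List.getD_append_right zw [c] 0 zw.length (le_refl _), Nat.sub_self]
    simp only [List.getD_cons_zero]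
    push_cast
    ring
  · have heq : i - 2 = (r - 1) + q * N := by linear_combination -hqr
    rw [heq, Int.add_mul_emod_self_right, Int.add_mul_ediv_right _ _ (by omega : N ≠ 0),
      Int.emod_eq_of_lt (by omega) (by omega), Int.ediv_eq_zero_of_lt (by omega) (by omega)]
    have hrt : r.toNat = (r.toNat - 1) + 1 := by omega
    have hrt2 : (r - 1).toNat = r.toNat - 1 := by omega
    rw [hrt, hrt2, List.getD_cons_succ]
    rw [List.getD_append zw [c] 0 _ (by rw [hzwl]; omega)]
    ring

end Aux

/-- If `v = a :: w` is a nonzero corotation of the standard word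
`u = w ++ [a]` (the last entry `a` of `u` has nonzero cocharge label), then
`I_k(ṽ) = I_k(ũ)` for every `k`. -/
theorem Ik_nonzero_corotation (n : ℕ) (w : List ℕ) (a : ℕ)
    (hu : IsStandardWord n (w ++ [a]))
    (hnz : (cochargeLabeling (w ++ [a])).getLastD 0 ≠ 0) :
    ∀ k : ℕ, Ik (extFn (a :: w) n) n k = Ik (extFn (w ++ [a]) n) n k := by
  intro k
  have hlen : w.length + 1 = n := by simpa using hu.length_eq
  have ha : 1 ≤ a ∧ a ≤ n := (mem_of_std hu).mp (by simp)
  have hlab : (cochargeLabeling (w ++ [a])).getLastD 0 = entryLabel (w ++ [a]) a := by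
    unfold cochargeLabeling
    rw [List.map_append]
    exact List.getLastD_concat
  have hanz : entryLabel (w ++ [a]) a ≠ 0 := hlab ▸ hnz
  have ha2 : 2 ≤ a := by
    by_contra hcon
    have : a = 1 := by omega
    subst this
    exact hanz (by simp [entryLabel])
  have hn1 : 1 ≤ n := by omega
  have hh : extFn (w ++ [a]) n (n : ℤ) ≠ 0 := by
    unfold extFn
    have hem : ∀ x y : ℤ, x.emod y = x % y := fun _ _ => rfl
    rw [hem]
    have h1 : ((n : ℤ) - 1) % (n : ℤ) = (n : ℤ) - 1 :=
      Int.emod_eq_of_lt (by omega) (by omega)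
    have h2 : ((n : ℤ) - 1).fdiv (n : ℤ) = 0 := by
      rw [Int.fdiv_eq_ediv_of_nonneg _ (by positivity)]
      exact Int.ediv_eq_zero_of_lt (by omega) (by omega)
    rw [h1, h2]
    have hzu : cochargeLabeling (w ++ [a]) =
        w.map (entryLabel (w ++ [a])) ++ [entryLabel (w ++ [a]) a] := by
      unfold cochargeLabeling; rw [List.map_append]; rfl
    have ht : ((n : ℤ) - 1).toNat = (w.map (entryLabel (w ++ [a]))).length := by
      rw [List.length_map]; omega
    rw [hzu, ht, List.getD_append_right _ _ _ _ (le_refl _), Nat.sub_self]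
    simp only [List.getD_cons_zero, sub_zero]
    exact_mod_cast hanz
  exact Ik_shift (extFn_corot hu ha2 ha.2) hh k
end
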